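/- Vacuum Markov rate: for m ≥ 0 and ω ∈ ℝ, the distributional integral g²∫ d³k/((2π)³ 2E_k) · 2π δ(ω + E_k), with E_k = √(|k|² + m²), evaluates to (g²/(2π)) √(ω² − m²) · Θ(−ω − m). Formally: for every continuous compactly supported test function φ : ℝ → ℝ, ∫_{ℝ³} φ(−E_k)/( (2π)³ 2E_k) · 2π d³k = ∫_ℝ φ(ω) (1/(2π)) √(ω² − m²) Θ(−ω − m) dω. -/

import Mathlib

open MeasureTheory

noncomputable def Ek (m : ℝ) (k : EuclideanSpace ℝ (Fin 3)) : ℝ :=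
  Real.sqrt (‖k‖ ^ 2 + m ^ 2)

noncomputable def heaviside (x : ℝ) : ℝ := if 0 < x then 1 else 0

theorem vacuum_markov_rate (m g : ℝ) (hm : 0 ≤ m)
    (φ : ℝ → ℝ) (hφ : Continuous φ) (hsupp : HasCompactSupport φ) :
    (∫ k : EuclideanSpace ℝ (Fin 3),
        g ^ 2 * φ (-(Ek m k)) / ((2 * Real.pi) ^ 3 * (2 * Ek m k)) * (2 * Real.pi))
      = ∫ ω : ℝ, φ ω * (g ^ 2 / (2 * Real.pi)) * Real.sqrt (ω ^ 2 - m ^ 2) *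
          heaviside (-ω - m) := by
  classical
  open Set in
  have hπ : (0 : ℝ) < Real.pi := Real.pi_pos
  -- the radial profile of the LHS integrand
  set F : ℝ → ℝ := fun r =>
    g ^ 2 * φ (-(Real.sqrt (r ^ 2 + m ^ 2))) /
      ((2 * Real.pi) ^ 3 * (2 * Real.sqrt (r ^ 2 + m ^ 2))) * (2 * Real.pi) with hFdef
  -- the integrand after the change of variables E = √(r² + m²)
  set G : ℝ → ℝ := fun E =>
    Real.sqrt (E ^ 2 - m ^ 2) *
      (g ^ 2 * φ (-E) * (2 * Real.pi) / ((2 * Real.pi) ^ 3 * 2)) with hGdef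
  -- Step 1 : spherical coordinates
  have hdim : Module.finrank ℝ (EuclideanSpace ℝ (Fin 3)) = 3 := by simp
  have hvol : (volume (Metric.ball (0 : EuclideanSpace ℝ (Fin 3)) 1)).toReal
      = 4 / 3 * Real.pi := by
    have h5 : Real.Gamma ((3 : ℝ) / 2 + 1) = 3 * Real.sqrt Real.pi / 4 := by
      rw [Real.Gamma_add_one (by norm_num), show (3 : ℝ)/2 = 1/2 + 1 by norm_num,
        Real.Gamma_add_one (by norm_num), Real.Gamma_one_half_eq]
      ring
    have hs : (0 : ℝ) < Real.sqrt Real.pi := Real.sqrt_pos.2 hπ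
    have hcube : Real.sqrt Real.pi ^ 3 = Real.pi * Real.sqrt Real.pi := by
      rw [pow_succ, Real.sq_sqrt hπ.le]
    rw [EuclideanSpace.volume_ball]
    simp only [Fintype.card_fin, Nat.cast_ofNat, ENNReal.ofReal_one, one_pow, one_mul]
    rw [ENNReal.toReal_ofReal (by positivity), h5, hcube, div_eq_iff (by positivity)]
    ring
  have hspher :
      (∫ k : EuclideanSpace ℝ (Fin 3),
        g ^ 2 * φ (-(Ek m k)) / ((2 * Real.pi) ^ 3 * (2 * Ek m k)) * (2 * Real.pi))
      = (4 * Real.pi) * ∫ r in Ioi (0 : ℝ), r ^ 2 • F r := by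
    have h := integral_fun_norm_addHaar
      (volume : Measure (EuclideanSpace ℝ (Fin 3))) F
    rw [hdim] at h
    have hL : (∫ k : EuclideanSpace ℝ (Fin 3),
        g ^ 2 * φ (-(Ek m k)) / ((2 * Real.pi) ^ 3 * (2 * Ek m k)) * (2 * Real.pi))
        = ∫ k : EuclideanSpace ℝ (Fin 3), F ‖k‖ := by
      simp only [hFdef, Ek]
    rw [hL, h, measureReal_def, hvol, nsmul_eq_mul, smul_eq_mul]
    norm_num
    ring
  -- Step 2 : change of variables r ↦ √(r² + m²)
  set f : ℝ → ℝ := fun r => Real.sqrt (r ^ 2 + m ^ 2) with hfdef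
  set f' : ℝ → ℝ := fun r => r / Real.sqrt (r ^ 2 + m ^ 2) with hf'def
  have hEpos : ∀ r : ℝ, r ∈ Ioi (0:ℝ) → 0 < r ^ 2 + m ^ 2 := by
    intro r hr; have : (0:ℝ) < r := hr; positivity
  have hderiv : ∀ r ∈ Ioi (0:ℝ), HasDerivWithinAt f (f' r) (Ioi 0) r := by
    intro r hr
    have h1 : HasDerivAt (fun r : ℝ => r ^ 2 + m ^ 2) (2 * r) r := by
      simpa using ((hasDerivAt_pow 2 r).add_const (m ^ 2))
    have h2 : HasDerivAt f (1 / (2 * Real.sqrt (r ^ 2 + m ^ 2)) * (2 * r)) r :=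
      (Real.hasDerivAt_sqrt (ne_of_gt (hEpos r hr))).comp r h1
    have h3 : 1 / (2 * Real.sqrt (r ^ 2 + m ^ 2)) * (2 * r) = f' r := by
      rw [hf'def]
      have hne : Real.sqrt (r ^ 2 + m ^ 2) ≠ 0 :=
        ne_of_gt (Real.sqrt_pos.2 (hEpos r hr))
      field_simp
    exact (h3 ▸ h2).hasDerivWithinAt
  have hinj : Set.InjOn f (Ioi 0) := by
    intro a ha b hb hab
    have h1 : a ^ 2 + m ^ 2 = b ^ 2 + m ^ 2 :=
      (Real.sqrt_inj (hEpos a ha).le (hEpos b hb).le).1 hab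
    have h2 : a ^ 2 = b ^ 2 := by linarith
    have ha' : (0:ℝ) < a := ha
    have hb' : (0:ℝ) < b := hb
    nlinarith
  have himg : f '' Ioi 0 = Ioi m := by
    ext E
    constructor
    · rintro ⟨r, hr, rfl⟩
      have hr' : (0:ℝ) < r := hr
      have : m = Real.sqrt (m ^ 2) := (Real.sqrt_sq hm).symm
      rw [Set.mem_Ioi, this, hfdef]
      exact Real.sqrt_lt_sqrt (sq_nonneg m) (by nlinarith)
    · intro hE
      have hE' : m < E := hE
      have hE0 : 0 < E := lt_of_le_of_lt hm hE'
      refine ⟨Real.sqrt (E ^ 2 - m ^ 2), ?_, ?_⟩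
      · exact Real.sqrt_pos.2 (by nlinarith)
      · have h1 : Real.sqrt (E ^ 2 - m ^ 2) ^ 2 = E ^ 2 - m ^ 2 :=
          Real.sq_sqrt (by nlinarith)
        show Real.sqrt (Real.sqrt (E ^ 2 - m ^ 2) ^ 2 + m ^ 2) = E
        rw [h1]
        simp only [sub_add_cancel]
        exact Real.sqrt_sq hE0.le
  have hchange : ∫ E in Ioi m, G E = ∫ r in Ioi (0:ℝ), r ^ 2 • F r := by
    rw [← himg, integral_image_eq_integral_abs_deriv_smul measurableSet_Ioi hderiv hinj G]
    refine setIntegral_congr_fun measurableSet_Ioi ?_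
    intro r hr
    have hr' : (0:ℝ) < r := hr
    have hEp : 0 < r ^ 2 + m ^ 2 := hEpos r hr
    have hsq : 0 < Real.sqrt (r ^ 2 + m ^ 2) := Real.sqrt_pos.2 hEp
    have h1 : Real.sqrt (r ^ 2 + m ^ 2) ^ 2 = r ^ 2 + m ^ 2 := Real.sq_sqrt hEp.le
    have h2 : Real.sqrt (f r ^ 2 - m ^ 2) = r := by
      rw [hfdef]
      simp only [h1]
      rw [show r ^ 2 + m ^ 2 - m ^ 2 = r ^ 2 by ring, Real.sqrt_sq hr'.le]
    have h3 : |f' r| = r / Real.sqrt (r ^ 2 + m ^ 2) := by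
      rw [hf'def, abs_of_nonneg (by positivity)]
    have h2' : Real.sqrt (Real.sqrt (r ^ 2 + m ^ 2) ^ 2 - m ^ 2) = r := h2
    simp only [hGdef, hFdef, smul_eq_mul, h2, h3, hfdef, h2']
    field_simp
  -- Step 3 : reflection E = -ω
  have hrefl : ∫ E in Ioi m, G E = ∫ ω in Iic (-m), G (-ω) := by
    have h := integral_comp_neg_Ioi m (fun ω => G (-ω))
    simpa using h.symm ▸ (by simp [neg_neg] : (∫ x in Ioi m, G (-(-x))) = ∫ x in Ioi m, G x).symm
  -- Step 4 : identify the RHS as an integral over Iio (-m)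
  have hRHS : (∫ ω : ℝ, φ ω * (g ^ 2 / (2 * Real.pi)) * Real.sqrt (ω ^ 2 - m ^ 2) *
          heaviside (-ω - m))
      = ∫ ω in Iio (-m), φ ω * (g ^ 2 / (2 * Real.pi)) * Real.sqrt (ω ^ 2 - m ^ 2) := by
    rw [← integral_indicator measurableSet_Iio]
    congr 1
    funext ω
    by_cases h : ω < -m
    · rw [Set.indicator_of_mem (Set.mem_Iio.mpr h)]
      have h0 : (0:ℝ) < -ω - m := by linarith
      simp [heaviside, h0]
    · rw [Set.indicator_of_notMem (by simpa using h)]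
      have h0 : ¬ (0:ℝ) < -ω - m := by push_neg at h ⊢; linarith
      simp [heaviside, h0]
  -- Step 5 : put everything together
  rw [hspher, hchange.symm, hrefl, hRHS, integral_Iic_eq_integral_Iio.symm,
    ← integral_const_mul]
  refine setIntegral_congr_fun measurableSet_Iic ?_
  intro ω _
  simp only [hGdef, neg_neg]
  have h1 : (-ω) ^ 2 = ω ^ 2 := by ring
  rw [h1]
  have h2 : (2 * Real.pi) ≠ 0 := by positivity
  field_simp
  ring
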